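/- arXiv:2301.11048 — 5 statements merged into one kernel-verified Lean document; each statement's English description precedes it below -/
import Mathlib

section
/- Let B be a finite antichain of finite equivalence relations under the embedding order, and let C = Av(B) be the set of all finite equivalence relations not embedding any element of B. Then C is atomic (satisfies the joint embedding property) if and only if every element of B is uniform, i.e., all of its equivalence classes have the same size. -/
/-- A finite equivalence relation. -/
def EqRel : Type := (n : ℕ) × Setoid (Fin n)

/-- The (non-consecutive) embedding order on finite equivalence relations. -/
def EmbedLE (a b : EqRel) : Prop :=
  ∃ f : Fin a.1 → Fin b.1, Function.Injective f ∧
    ∀ x y, a.2.r x y ↔ b.2.r (f x) (f y)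

/-- The avoidance set of `B`: all finite equivalence relations embedding no
element of `B`. -/
def Av (B : Set EqRel) : Set EqRel := {τ | ∀ β ∈ B, ¬ EmbedLE β τ}

/-- An equivalence relation is uniform if all its classes have the same size. -/
def Uniform (a : EqRel) : Prop :=
  ∀ c₁ ∈ a.2.classes, ∀ c₂ ∈ a.2.classes, c₁.ncard = c₂.ncard

namespace AvAux

open Set Function

/-- The class of `x`. -/
def C {α : Type*} (r : Setoid α) (x : α) : {c // c ∈ r.classes} :=
  ⟨{z | r z x}, r.mem_classes x⟩

lemma mem_C {α : Type*} (r : Setoid α) (x : α) : x ∈ (C r x : Set α) := r.refl' x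

lemma rel_of_mem_class {α : Type*} {r : Setoid α} {c : Set α} (hc : c ∈ r.classes)
    {x y : α} (hx : x ∈ c) (hy : y ∈ c) : r x y := by
  obtain ⟨w, rfl⟩ := hc
  exact r.trans' hx (r.symm' hy)

lemma class_eq_of_rel {α : Type*} {r : Setoid α} {c c' : Set α} (hc : c ∈ r.classes)
    (hc' : c' ∈ r.classes) {x y : α} (hx : x ∈ c) (hy : y ∈ c') (hxy : r x y) : c = c' := by
  obtain ⟨w, rfl⟩ := hc
  exact Setoid.eq_of_mem_classes (r.mem_classes w) (r.trans' (r.symm' hxy) hx) hc' hy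

lemma rel_iff_C_eq {α : Type*} (r : Setoid α) (x y : α) : r x y ↔ C r x = C r y := by
  constructor
  · intro h
    exact Subtype.ext (class_eq_of_rel (C r x).2 (C r y).2 (mem_C r x) (mem_C r y) h)
  · intro h
    have hx : x ∈ (C r y : Set α) := h ▸ mem_C r x
    exact hx

lemma class_nonempty {α : Type*} {r : Setoid α} {c : Set α} (hc : c ∈ r.classes) :
    c.Nonempty := by
  obtain ⟨w, rfl⟩ := hc
  exact ⟨w, r.refl' w⟩

lemma ncard_class_pos {n : ℕ} {r : Setoid (Fin n)} {c : Set (Fin n)} (hc : c ∈ r.classes) :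
    0 < c.ncard :=
  (class_nonempty hc).ncard_pos (Set.toFinite c)

/-- existence of an injection between finite types from a card inequality -/
lemma inj_of_card_le {α β : Type*} [Finite α] [Finite β] (h : Nat.card α ≤ Nat.card β) :
    ∃ f : α → β, Injective f := by
  have := Fintype.ofFinite α
  have := Fintype.ofFinite β
  rw [Nat.card_eq_fintype_card, Nat.card_eq_fintype_card] at h
  obtain ⟨f⟩ := Function.Embedding.nonempty_of_card_le h
  exact ⟨f, f.injective⟩

lemma inj_fin_to_set {n m : ℕ} {c : Set (Fin n)} (h : m ≤ c.ncard) :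
    ∃ f : Fin m → c, Injective f := by
  apply inj_of_card_le
  simpa [Nat.card_coe_set_eq] using h

lemma inj_set_to_fin {n m : ℕ} {c : Set (Fin n)} (h : c.ncard ≤ m) :
    ∃ f : c → Fin m, Injective f := by
  apply inj_of_card_le
  simpa [Nat.card_coe_set_eq] using h

lemma inj_set_to_set {n m : ℕ} {c : Set (Fin n)} {d : Set (Fin m)} (h : c.ncard ≤ d.ncard) :
    ∃ f : c → d, Injective f := by
  apply inj_of_card_le
  simpa [Nat.card_coe_set_eq] using h

lemma embedLE_trans {a b c : EqRel} (h1 : EmbedLE a b) (h2 : EmbedLE b c) : EmbedLE a c := by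
  obtain ⟨f, hf, hfr⟩ := h1
  obtain ⟨g, hg, hgr⟩ := h2
  exact ⟨g ∘ f, hg.comp hf, fun x y => (hfr x y).trans (hgr (f x) (f y))⟩

lemma sigma_fin_ext {ι : Type*} {s : ι → ℕ} {p q : Σ i, Fin (s i)}
    (h1 : p.1 = q.1) (h2 : (p.2 : ℕ) = (q.2 : ℕ)) : p = q := by
  obtain ⟨i, v⟩ := p
  obtain ⟨j, w⟩ := q
  cases h1
  simp_all [Fin.ext_iff]

noncomputable def mkEquiv {ι : Type*} [Fintype ι] (s : ι → ℕ) :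
    (Σ i, Fin (s i)) ≃ Fin (Fintype.card (Σ i, Fin (s i))) := Fintype.equivFin _

noncomputable def mkE {ι : Type*} [Fintype ι] (s : ι → ℕ) : EqRel :=
  show (n : ℕ) × Setoid (Fin n) from
  ⟨Fintype.card (Σ i, Fin (s i)),
   { r := fun x y => ((mkEquiv s).symm x).1 = ((mkEquiv s).symm y).1
     iseqv := ⟨fun _ => rfl, Eq.symm, Eq.trans⟩ }⟩

lemma mkE_rel {ι : Type*} [Fintype ι] (s : ι → ℕ) (x y : Fin (mkE s).1) :
    (mkE s).2.r x y ↔ ((mkEquiv s).symm x).1 = ((mkEquiv s).symm y).1 := Iff.rfl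

/-- CE : combinatorial data gives an embedding. -/
lemma embed_of_classes_map {a b : EqRel} (G : {c // c ∈ a.2.classes} → {c // c ∈ b.2.classes})
    (hG : Injective G) (hs : ∀ c : {c // c ∈ a.2.classes}, (c.1).ncard ≤ ((G c).1).ncard) :
    EmbedLE a b := by
  choose j hj using fun c => inj_set_to_set (hs c)
  have jcongr : ∀ (c c' : {c // c ∈ a.2.classes}) (h : c = c') (z : Fin a.1)
      (hz : z ∈ (c : Set (Fin a.1))) (hz' : z ∈ (c' : Set (Fin a.1))),
      (j c ⟨z, hz⟩ : Fin b.1) = j c' ⟨z, hz'⟩ := by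
    intro c c' h
    subst h
    intro z hz hz'
    rfl
  refine ⟨fun x => (j (C a.2 x) ⟨x, mem_C _ x⟩ : Fin b.1), ?_, ?_⟩
  · intro x y hxy
    replace hxy : (j (C a.2 x) ⟨x, mem_C _ x⟩ : Fin b.1) =
        (j (C a.2 y) ⟨y, mem_C _ y⟩ : Fin b.1) := hxy
    have hb : b.2.r (j (C a.2 x) ⟨x, mem_C _ x⟩ : Fin b.1)
        (j (C a.2 y) ⟨y, mem_C _ y⟩ : Fin b.1) := by
      rw [hxy]
    have hcls : (G (C a.2 x) : Set (Fin b.1)) = G (C a.2 y) :=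
      class_eq_of_rel (G (C a.2 x)).2 (G (C a.2 y)).2 (j _ _).2 (j _ _).2 hb
    have hC : C a.2 x = C a.2 y := hG (Subtype.ext hcls)
    have hy' : y ∈ (C a.2 x : Set (Fin a.1)) := by rw [hC]; exact mem_C _ y
    have hjj : (j (C a.2 x) ⟨x, mem_C _ x⟩ : Fin b.1) = j (C a.2 x) ⟨y, hy'⟩ := by
      rw [hxy]
      exact jcongr (C a.2 y) (C a.2 x) hC.symm y (mem_C _ y) hy'
    have := hj (C a.2 x) (Subtype.ext hjj)
    exact congrArg Subtype.val this
  · intro x y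
    constructor
    · intro hxy
      have hC : C a.2 x = C a.2 y := (rel_iff_C_eq a.2 x y).mp hxy
      apply rel_of_mem_class (G (C a.2 x)).2 (j (C a.2 x) ⟨x, mem_C _ x⟩).2
      have : (G (C a.2 y) : Set (Fin b.1)) = G (C a.2 x) := by rw [hC]
      exact this ▸ (j (C a.2 y) ⟨y, mem_C _ y⟩).2
    · intro hb
      have hcls : (G (C a.2 x) : Set (Fin b.1)) = G (C a.2 y) :=
        class_eq_of_rel (G (C a.2 x)).2 (G (C a.2 y)).2 (j _ _).2 (j _ _).2 hb
      exact (rel_iff_C_eq a.2 x y).mpr (hG (Subtype.ext hcls))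

/-- M1 : mkE s embeds into τ given suitable classes of τ. -/
lemma mkE_embed_of {ι : Type*} [Fintype ι] {s : ι → ℕ} {τ : EqRel}
    (g : ι → {c // c ∈ τ.2.classes}) (hg : Injective g)
    (hs : ∀ i, s i ≤ ((g i).1).ncard) : EmbedLE (mkE s) τ := by
  choose j hj using fun i => inj_fin_to_set (hs i)
  have key : ∀ (i i' : ι) (h : i = i') (v : Fin (s i)) (v' : Fin (s i')),
      (j i v : Fin τ.1) = j i' v' → (v : ℕ) = (v' : ℕ) := by
    intro i i' h
    subst h
    intro v v' hv
    exact congrArg Fin.val (hj i (Subtype.ext hv))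
  have hrel : ∀ x y : Fin (mkE s).1,
      ((mkEquiv s).symm x).1 = ((mkEquiv s).symm y).1 ↔
        τ.2.r (j ((mkEquiv s).symm x).1 ((mkEquiv s).symm x).2 : Fin τ.1)
              (j ((mkEquiv s).symm y).1 ((mkEquiv s).symm y).2 : Fin τ.1) := by
    intro x y
    constructor
    · intro h
      apply rel_of_mem_class (g ((mkEquiv s).symm x).1).2 (j _ _).2
      have : (g ((mkEquiv s).symm y).1 : Set (Fin τ.1)) = g ((mkEquiv s).symm x).1 := by rw [h]
      exact this ▸ (j _ _).2
    · intro h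
      have hcls : (g ((mkEquiv s).symm x).1 : Set (Fin τ.1)) = g ((mkEquiv s).symm y).1 :=
        class_eq_of_rel (g _).2 (g _).2 (j _ _).2 (j _ _).2 h
      exact hg (Subtype.ext hcls)
  refine ⟨fun x => (j ((mkEquiv s).symm x).1 ((mkEquiv s).symm x).2 : Fin τ.1), ?_, hrel⟩
  intro x y hxy
  replace hxy : (j ((mkEquiv s).symm x).1 ((mkEquiv s).symm x).2 : Fin τ.1) =
      (j ((mkEquiv s).symm y).1 ((mkEquiv s).symm y).2 : Fin τ.1) := hxy
  have hb : τ.2.r (j ((mkEquiv s).symm x).1 ((mkEquiv s).symm x).2 : Fin τ.1)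
      (j ((mkEquiv s).symm y).1 ((mkEquiv s).symm y).2 : Fin τ.1) := by
    rw [hxy]
  have hfst := (hrel x y).mpr hb
  have hsnd := key _ _ hfst _ _ hxy
  have := sigma_fin_ext hfst hsnd
  exact (mkEquiv s).symm.injective this

/-- M2 : τ embeds into mkE s given injection of classes with sizes dominated. -/
lemma embed_into_mkE {ι : Type*} [Fintype ι] {s : ι → ℕ} {τ : EqRel}
    (g : {c // c ∈ τ.2.classes} → ι) (hg : Injective g)
    (hs : ∀ c : {c // c ∈ τ.2.classes}, (c.1).ncard ≤ s (g c)) : EmbedLE τ (mkE s) := by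
  choose j hj using fun c => inj_set_to_fin (hs c)
  have key : ∀ (c c' : {c // c ∈ τ.2.classes}) (h : c = c') (u : (c : Set (Fin τ.1)))
      (u' : (c' : Set (Fin τ.1))), (j c u : ℕ) = (j c' u' : ℕ) → (u : Fin τ.1) = u' := by
    intro c c' h
    subst h
    intro u u' huv
    exact congrArg Subtype.val (hj c (Fin.ext huv))
  refine ⟨fun x => mkEquiv s ⟨g (C τ.2 x), j (C τ.2 x) ⟨x, mem_C _ x⟩⟩, ?_, ?_⟩
  · intro x y hxy
    have hsig : (⟨g (C τ.2 x), j (C τ.2 x) ⟨x, mem_C _ x⟩⟩ : Σ i, Fin (s i)) =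
        ⟨g (C τ.2 y), j (C τ.2 y) ⟨y, mem_C _ y⟩⟩ := (mkEquiv s).injective hxy
    have hfst : g (C τ.2 x) = g (C τ.2 y) := congrArg Sigma.fst hsig
    have hC : C τ.2 x = C τ.2 y := hg hfst
    have hsnd : ((j (C τ.2 x) ⟨x, mem_C _ x⟩ : Fin (s (g (C τ.2 x)))) : ℕ) =
        ((j (C τ.2 y) ⟨y, mem_C _ y⟩ : Fin (s (g (C τ.2 y)))) : ℕ) :=
      congrArg (fun p : Σ i, Fin (s i) => (p.2 : ℕ)) hsig
    exact key _ _ hC _ _ hsnd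
  · intro x y
    refine Iff.trans ?_ (mkE_rel s _ _).symm
    simp only [Equiv.symm_apply_apply]
    constructor
    · intro hxy
      have hC : C τ.2 x = C τ.2 y := (rel_iff_C_eq τ.2 x y).mp hxy
      rw [hC]
    · intro h
      exact (rel_iff_C_eq τ.2 x y).mpr (hg h)

/-- M3 : if mkE s embeds in τ (with positive sizes), extract classes of τ. -/
lemma classes_of_mkE_embed {ι : Type*} [Fintype ι] {s : ι → ℕ} {τ : EqRel}
    (hpos : ∀ i, 0 < s i) (h : EmbedLE (mkE s) τ) :
    ∃ g : ι → {c // c ∈ τ.2.classes}, Injective g ∧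
      ∀ i, s i ≤ ((g i).1).ncard := by
  obtain ⟨f, hf, hr⟩ := h
  set e := mkEquiv s with he
  let p : ι → Fin (mkE s).1 := fun i => e ⟨i, ⟨0, hpos i⟩⟩
  have hfst : ∀ i (v : Fin (s i)), τ.2.r (f (e ⟨i, v⟩)) (f (p i)) := by
    intro i v
    apply (hr _ _).mp
    refine (mkE_rel s _ _).mpr ?_
    simp [he, p]
  refine ⟨fun i => C τ.2 (f (p i)), ?_, ?_⟩
  · intro i i' hii
    have h1 : τ.2.r (f (p i)) (f (p i')) := (rel_iff_C_eq τ.2 _ _).mpr hii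
    have h2 : (mkE s).2.r (p i) (p i') := (hr _ _).mpr h1
    rw [mkE_rel] at h2
    simpa [he, p] using h2
  · intro i
    have hinj : Injective (fun v : Fin (s i) =>
        (⟨f (e ⟨i, v⟩), hfst i v⟩ : (C τ.2 (f (p i)) : Set (Fin τ.1)))) := by
      intro v w hvw
      have : f (e ⟨i, v⟩) = f (e ⟨i, w⟩) := congrArg Subtype.val hvw
      have := (mkEquiv s).injective (hf this)
      have := congrArg (fun q : Σ i, Fin (s i) => (q.2 : ℕ)) this
      exact Fin.ext this
    have := Nat.card_le_card_of_injective _ hinj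
    simpa [Nat.card_coe_set_eq] using this

/-- M45 : if τ embeds into mkE s, extract a classes map of τ into ι. -/
lemma classes_embed_into_mkE {ι : Type*} [Fintype ι] {s : ι → ℕ} {τ : EqRel}
    (h : EmbedLE τ (mkE s)) :
    ∃ g : {c // c ∈ τ.2.classes} → ι, Injective g ∧
      ∀ c : {c // c ∈ τ.2.classes}, (c.1).ncard ≤ s (g c) := by
  obtain ⟨f, hf, hr⟩ := h
  set e := mkEquiv s with he
  have hrep : ∀ c : {c // c ∈ τ.2.classes}, ∃ x, x ∈ (c : Set (Fin τ.1)) :=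
    fun c => class_nonempty c.2
  choose rep hrepmem using hrep
  refine ⟨fun c => (e.symm (f (rep c))).1, ?_, ?_⟩
  · intro c c' hcc
    have h1 : (mkE s).2.r (f (rep c)) (f (rep c')) := by rw [mkE_rel]; exact hcc
    have h2 : τ.2.r (rep c) (rep c') := (hr _ _).mpr h1
    exact Subtype.ext (class_eq_of_rel c.2 c'.2 (hrepmem c) (hrepmem c') h2)
  · intro c
    have hmem : ∀ x (hx : x ∈ (c : Set (Fin τ.1))),
        (e.symm (f x)).1 = (e.symm (f (rep c))).1 := by
      intro x hx
      have h1 : τ.2.r x (rep c) := rel_of_mem_class c.2 hx (hrepmem c)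
      have h2 := (hr _ _).mp h1
      rw [mkE_rel] at h2
      exact h2
    have hinj : Injective (fun x : (c : Set (Fin τ.1)) =>
        Fin.cast (congrArg s (hmem x.1 x.2)) (e.symm (f x.1)).2) := by
      intro x y hxy
      have hval : ((e.symm (f x.1)).2 : ℕ) = ((e.symm (f y.1)).2 : ℕ) := by
        have := congrArg Fin.val hxy
        simpa using this
      have hfst2 : (e.symm (f x.1)).1 = (e.symm (f y.1)).1 := by
        rw [hmem x.1 x.2, hmem y.1 y.2]
      have := sigma_fin_ext hfst2 hval
      have := e.symm.injective this
      exact Subtype.ext (hf this)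
    have := Nat.card_le_card_of_injective _ hinj
    simpa [Nat.card_coe_set_eq] using this


lemma embed_of_fst_zero {a b : EqRel} (h : a.1 = 0) : EmbedLE a b := by
  refine ⟨fun x => absurd x.2 (by omega), ?_, ?_⟩
  · intro x
    exact absurd x.2 (by omega)
  · intro x
    exact absurd x.2 (by omega)

/-- A sorted (antitone) enumeration of the classes of `τ`. -/
lemma sorted_class_sizes (τ : EqRel) :
    ∃ (k : ℕ) (o : Fin k ≃ {c // c ∈ τ.2.classes}),
      k = Nat.card {c // c ∈ τ.2.classes} ∧ Antitone (fun i => ((o i).1).ncard) := by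
  set k := Nat.card {c // c ∈ τ.2.classes} with hk
  let E : Fin k ≃ {c // c ∈ τ.2.classes} := (Finite.equivFinOfCardEq rfl).symm
  let w : Fin k → ℕ := fun i => ((E i).1).ncard
  refine ⟨k, (Fin.revPerm.trans (Tuple.sort w)).trans E, rfl, ?_⟩
  intro i j hij
  have h1 : Fin.rev j ≤ Fin.rev i := Fin.rev_le_rev.mpr hij
  have := Tuple.monotone_sort w h1
  simpa using this

/-- If all classes of `β` have size `m` and there are `k` of them, and `τ` has `k`
classes of size `≥ m` then `β` embeds into `τ`. -/
lemma embed_of_many_big_classes {β τ : EqRel} {m k : ℕ}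
    (hm : ∀ c : {c // c ∈ β.2.classes}, (c.1).ncard = m)
    (hk : Nat.card {c // c ∈ β.2.classes} = k)
    (g : Fin k → {c // c ∈ τ.2.classes}) (hg : Injective g)
    (hsz : ∀ i, m ≤ ((g i).1).ncard) : EmbedLE β τ := by
  let E : {c // c ∈ β.2.classes} ≃ Fin k := Finite.equivFinOfCardEq hk
  refine embed_of_classes_map (fun c => g (E c)) (hg.comp E.injective) ?_
  intro c
  rw [hm c]
  exact hsz (E c)

/-- From many indices with `m ≤ u' i`, extract many classes of `τ` of size `≥ m`. -/
lemma side_embed {τ : EqRel} {K k₁ m k : ℕ} (o : Fin k₁ ≃ {c // c ∈ τ.2.classes})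
    (u' : Fin K → ℕ) (hu' : ∀ (i : Fin K) (h : (i : ℕ) < k₁), u' i = ((o ⟨i, h⟩).1).ncard)
    (hu'0 : ∀ (i : Fin K), ¬ ((i : ℕ) < k₁) → u' i = 0) (hm : 1 ≤ m)
    (hcard : k ≤ (Finset.univ.filter (fun i => m ≤ u' i)).card) :
    ∃ g : Fin k → {c // c ∈ τ.2.classes}, Injective g ∧ ∀ i, m ≤ ((g i).1).ncard := by
  have hcard' : Nat.card (Fin k) ≤
      Nat.card {i // i ∈ Finset.univ.filter (fun i => m ≤ u' i)} := by
    rw [Nat.card_eq_finsetCard, Nat.card_eq_fintype_card, Fintype.card_fin]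
    exact hcard
  obtain ⟨h, hinj⟩ := inj_of_card_le hcard'
  have hlt : ∀ a : Fin k, ((h a).1 : ℕ) < k₁ := by
    intro a
    by_contra hc
    have hmem := (h a).2
    rw [Finset.mem_filter] at hmem
    have := hu'0 (h a).1 hc
    omega
  refine ⟨fun a => o ⟨(h a).1, hlt a⟩, ?_, ?_⟩
  · intro a a' haa
    have := o.injective haa
    have hval := congrArg Fin.val this
    exact hinj (Subtype.ext (Fin.ext hval))
  · intro a
    have hmem := (h a).2
    rw [Finset.mem_filter] at hmem
    have := hu' (h a).1 (hlt a)
    rw [this] at hmem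
    exact hmem.2

/-- two lower finsets in `Fin K` are comparable -/
lemma lower_comparable {K : ℕ} (A C : Finset (Fin K))
    (hA : ∀ i j : Fin K, i ≤ j → j ∈ A → i ∈ A)
    (hC : ∀ i j : Fin K, i ≤ j → j ∈ C → i ∈ C) : A ⊆ C ∨ C ⊆ A := by
  by_contra hcon
  push_neg at hcon
  obtain ⟨x, hxA, hxC⟩ := Finset.not_subset.mp hcon.1
  obtain ⟨y, hyC, hyA⟩ := Finset.not_subset.mp hcon.2
  rcases le_total x y with hxy | hyx
  · exact hxC (hC x y hxy hyC)
  · exact hyA (hA y x hyx hxA)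



open Set Function

theorem forward (B : Set EqRel)
    (hanti : ∀ β₁ ∈ B, ∀ β₂ ∈ B, β₁ ≠ β₂ → ¬ EmbedLE β₁ β₂)
    (hJEP : ∀ σ ∈ Av B, ∀ ρ ∈ Av B, ∃ θ ∈ Av B, EmbedLE σ θ ∧ EmbedLE ρ θ) :
    ∀ β ∈ B, Uniform β := by
  intro β hβ
  by_contra hnu
  unfold Uniform at hnu
  push_neg at hnu
  obtain ⟨c₁, hc₁, c₂, hc₂, hne⟩ := hnu
  obtain ⟨c₀, hc₀, hmin⟩ := Set.exists_min_image β.2.classes (fun c => c.ncard)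
    (Set.toFinite _) ⟨c₁, hc₁⟩
  set d := c₀.ncard with hd
  have hdpos : 0 < d := ncard_class_pos hc₀
  have hbig : ∃ c ∈ β.2.classes, d < c.ncard := by
    by_cases h1 : c₁.ncard = d
    · exact ⟨c₂, hc₂, lt_of_le_of_ne (hmin c₂ hc₂) (fun h => hne (h1.trans h))⟩
    · exact ⟨c₁, hc₁, lt_of_le_of_ne (hmin c₁ hc₁) (Ne.symm h1)⟩
  obtain ⟨cbig, hcbig, hdbig⟩ := hbig
  haveI : Nonempty {c // c ∈ β.2.classes} := ⟨⟨c₁, hc₁⟩⟩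
  set k := Nat.card {c // c ∈ β.2.classes} with hk
  have hk1 : 1 ≤ k := Nat.card_pos (α := {c // c ∈ β.2.classes})
  -- the two auxiliary structures
  letI : Fintype {c // c ∈ β.2.classes \ {c₀}} := Fintype.ofFinite _
  set s₁ : {c // c ∈ β.2.classes \ {c₀}} → ℕ := fun c => (c.1).ncard with hs₁
  set σ := mkE s₁ with hσ
  set s₂ : Fin k → ℕ := fun _ => d with hs₂
  set ρ := mkE s₂ with hρ
  have hcard_diff : Nat.card {c // c ∈ β.2.classes \ {c₀}} = k - 1 := by
    rw [Nat.card_coe_set_eq, Set.ncard_diff_singleton_of_mem hc₀, hk,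
      Nat.card_coe_set_eq]
  have hσβ : EmbedLE σ β := by
    apply mkE_embed_of (g := fun c => ⟨c.1, c.2.1⟩)
    · intro c c' h
      have h' := congrArg Subtype.val h
      exact Subtype.ext h' 
    · intro i
      exact le_refl _
  have hρβ : EmbedLE ρ β := by
    apply mkE_embed_of (g := (Finite.equivFinOfCardEq hk.symm).symm)
    · exact (Finite.equivFinOfCardEq hk.symm).symm.injective
    · intro i
      exact hmin _ ((Finite.equivFinOfCardEq hk.symm).symm i).2
  have hnβσ : ¬ EmbedLE β σ := by
    intro h
    obtain ⟨g, hg, _⟩ := classes_embed_into_mkE h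
    have := Nat.card_le_card_of_injective g hg
    rw [hcard_diff, ← hk] at this
    omega
  have hnβρ : ¬ EmbedLE β ρ := by
    intro h
    obtain ⟨g, hg, hsz⟩ := classes_embed_into_mkE h
    have := hsz ⟨cbig, hcbig⟩
    simp only [hs₂] at this
    omega
  have hσAv : σ ∈ Av B := by
    intro β' hβ' hemb
    by_cases hbb : β' = β
    · exact hnβσ (hbb ▸ hemb)
    · exact hanti β' hβ' β hβ hbb (embedLE_trans hemb hσβ)
  have hρAv : ρ ∈ Av B := by
    intro β' hβ' hemb
    by_cases hbb : β' = β
    · exact hnβρ (hbb ▸ hemb)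
    · exact hanti β' hβ' β hβ hbb (embedLE_trans hemb hρβ)
  obtain ⟨θ, hθAv, hσθ, hρθ⟩ := hJEP σ hσAv ρ hρAv
  have hpos₁ : ∀ c : {c // c ∈ β.2.classes \ {c₀}}, 0 < s₁ c :=
    fun c => ncard_class_pos c.2.1
  obtain ⟨g₁, hg₁, hsz₁⟩ := classes_of_mkE_embed hpos₁ hσθ
  obtain ⟨g₂, hg₂, hsz₂⟩ := classes_of_mkE_embed (fun _ => hdpos) hρθ
  have hD : ∃ j, g₂ j ∉ Set.range g₁ := by
    by_contra h
    push_neg at h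
    simp only [Set.mem_range] at h
    choose φ hφ using h
    have hφinj : Injective φ := by
      intro j j' e
      apply hg₂
      rw [← hφ j, ← hφ j', e]
    have := Nat.card_le_card_of_injective φ hφinj
    rw [hcard_diff, Nat.card_eq_fintype_card, Fintype.card_fin] at this
    omega
  obtain ⟨j0, hj0⟩ := hD
  classical
  set G : {c // c ∈ β.2.classes} → {c // c ∈ θ.2.classes} :=
    fun c => if h : c.1 = c₀ then g₂ j0 else g₁ ⟨c.1, ⟨c.2, h⟩⟩ with hG
  have hGpos : ∀ (c : {c // c ∈ β.2.classes}) (h : c.1 = c₀), G c = g₂ j0 :=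
    fun c h => dif_pos h
  have hGneg : ∀ (c : {c // c ∈ β.2.classes}) (h : ¬ c.1 = c₀),
      G c = g₁ ⟨c.1, ⟨c.2, h⟩⟩ := fun c h => dif_neg h
  have hGinj : Injective G := by
    intro c c' h
    by_cases h1 : c.1 = c₀ <;> by_cases h2 : c'.1 = c₀
    · exact Subtype.ext (h1.trans h2.symm)
    · rw [hGpos c h1, hGneg c' h2] at h
      exact absurd ⟨_, h.symm⟩ hj0
    · rw [hGpos c' h2, hGneg c h1] at h
      exact absurd ⟨_, h⟩ hj0
    · rw [hGneg c h1, hGneg c' h2] at h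
      have := hg₁ h
      have h' := congrArg Subtype.val this
      exact Subtype.ext h'
  have hGsz : ∀ c : {c // c ∈ β.2.classes}, (c.1).ncard ≤ ((G c).1).ncard := by
    intro c
    by_cases h1 : c.1 = c₀
    · rw [hGpos c h1]
      have := hsz₂ j0
      change d ≤ _ at this
      rw [h1, ← hd]
      exact this
    · rw [hGneg c h1]
      exact hsz₁ ⟨c.1, ⟨c.2, h1⟩⟩
  exact hθAv β hβ (embed_of_classes_map G hGinj hGsz)


theorem backward (B : Set EqRel) (hU : ∀ β ∈ B, Uniform β) :
    ∀ σ ∈ Av B, ∀ ρ ∈ Av B, ∃ θ ∈ Av B, EmbedLE σ θ ∧ EmbedLE ρ θ := by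
  intro σ hσ ρ hρ
  classical
  obtain ⟨k₁, o₁, hk₁, hanti₁⟩ := sorted_class_sizes σ
  obtain ⟨k₂, o₂, hk₂, hanti₂⟩ := sorted_class_sizes ρ
  set K := max k₁ k₂ with hK
  set u' : Fin K → ℕ :=
    fun i => if h : (i : ℕ) < k₁ then ((o₁ ⟨i, h⟩).1).ncard else 0 with hu'
  set v' : Fin K → ℕ :=
    fun i => if h : (i : ℕ) < k₂ then ((o₂ ⟨i, h⟩).1).ncard else 0 with hv'
  have hu'pos : ∀ (i : Fin K) (h : (i : ℕ) < k₁), u' i = ((o₁ ⟨i, h⟩).1).ncard :=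
    fun i h => dif_pos h
  have hu'neg : ∀ (i : Fin K), ¬ ((i : ℕ) < k₁) → u' i = 0 := fun i h => dif_neg h
  have hv'pos : ∀ (i : Fin K) (h : (i : ℕ) < k₂), v' i = ((o₂ ⟨i, h⟩).1).ncard :=
    fun i h => dif_pos h
  have hv'neg : ∀ (i : Fin K), ¬ ((i : ℕ) < k₂) → v' i = 0 := fun i h => dif_neg h
  set s : Fin K → ℕ := fun i => max (u' i) (v' i) with hs
  set θ := mkE s with hθ
  have hu'anti : ∀ i j : Fin K, i ≤ j → u' j ≤ u' i := by
    intro i j hij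
    by_cases hlt : (j : ℕ) < k₁
    · have hij' : (i : ℕ) ≤ (j : ℕ) := hij
      have hlti : (i : ℕ) < k₁ := lt_of_le_of_lt hij' hlt
      rw [hu'pos j hlt, hu'pos i hlti]
      exact hanti₁ (show (⟨(i : ℕ), hlti⟩ : Fin k₁) ≤ ⟨(j : ℕ), hlt⟩ from hij')
    · rw [hu'neg j hlt]
      exact Nat.zero_le _
  have hv'anti : ∀ i j : Fin K, i ≤ j → v' j ≤ v' i := by
    intro i j hij
    by_cases hlt : (j : ℕ) < k₂
    · have hij' : (i : ℕ) ≤ (j : ℕ) := hij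
      have hlti : (i : ℕ) < k₂ := lt_of_le_of_lt hij' hlt
      rw [hv'pos j hlt, hv'pos i hlti]
      exact hanti₂ (show (⟨(i : ℕ), hlti⟩ : Fin k₂) ≤ ⟨(j : ℕ), hlt⟩ from hij')
    · rw [hv'neg j hlt]
      exact Nat.zero_le _
  have hσθ : EmbedLE σ θ := by
    apply embed_into_mkE (g := fun c => Fin.castLE (le_max_left k₁ k₂) (o₁.symm c))
    · exact (Fin.castLE_injective _).comp o₁.symm.injective
    · intro c
      have hlt : ((o₁.symm c : Fin k₁) : ℕ) < k₁ := (o₁.symm c).2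
      have h1 : u' (Fin.castLE (le_max_left k₁ k₂) (o₁.symm c)) =
          ((o₁ ⟨((o₁.symm c : Fin k₁) : ℕ), hlt⟩).1).ncard := hu'pos _ hlt
      have h2 : ((o₁ ⟨((o₁.symm c : Fin k₁) : ℕ), hlt⟩).1).ncard = (c.1).ncard := by
        rw [Fin.eta, Equiv.apply_symm_apply]
      calc (c.1).ncard = u' (Fin.castLE (le_max_left k₁ k₂) (o₁.symm c)) :=
            (h1.trans h2).symm
        _ ≤ s (Fin.castLE (le_max_left k₁ k₂) (o₁.symm c)) := le_max_left _ _
  have hρθ : EmbedLE ρ θ := by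
    apply embed_into_mkE (g := fun c => Fin.castLE (le_max_right k₁ k₂) (o₂.symm c))
    · exact (Fin.castLE_injective _).comp o₂.symm.injective
    · intro c
      have hlt : ((o₂.symm c : Fin k₂) : ℕ) < k₂ := (o₂.symm c).2
      have h1 : v' (Fin.castLE (le_max_right k₁ k₂) (o₂.symm c)) =
          ((o₂ ⟨((o₂.symm c : Fin k₂) : ℕ), hlt⟩).1).ncard := hv'pos _ hlt
      have h2 : ((o₂ ⟨((o₂.symm c : Fin k₂) : ℕ), hlt⟩).1).ncard = (c.1).ncard := by
        rw [Fin.eta, Equiv.apply_symm_apply]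
      calc (c.1).ncard = v' (Fin.castLE (le_max_right k₁ k₂) (o₂.symm c)) :=
            (h1.trans h2).symm
        _ ≤ s (Fin.castLE (le_max_right k₁ k₂) (o₂.symm c)) := le_max_right _ _
  refine ⟨θ, ?_, hσθ, hρθ⟩
  intro β hβ hemb
  by_cases hb0 : β.1 = 0
  · exact hσ β hβ (embed_of_fst_zero hb0)
  have hb0' : 0 < β.1 := Nat.pos_of_ne_zero hb0
  set cstar := C β.2 (⟨0, hb0'⟩ : Fin β.1) with hcstar
  set m := (cstar.1).ncard with hm
  have hm1 : 1 ≤ m := ncard_class_pos cstar.2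
  have hunif : ∀ c : {c // c ∈ β.2.classes}, (c.1).ncard = m :=
    fun c => hU β hβ c.1 c.2 cstar.1 cstar.2
  haveI : Nonempty {c // c ∈ β.2.classes} := ⟨cstar⟩
  set k := Nat.card {c // c ∈ β.2.classes} with hk
  obtain ⟨G, hG, hGsz⟩ := classes_embed_into_mkE hemb
  set T₁ := Finset.univ.filter (fun i => m ≤ u' i) with hT₁
  set T₂ := Finset.univ.filter (fun i => m ≤ v' i) with hT₂
  have hmemT : ∀ c : {c // c ∈ β.2.classes}, G c ∈ T₁ ∪ T₂ := by
    intro c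
    have h1 := hGsz c
    rw [hunif c] at h1
    rw [Finset.mem_union, hT₁, hT₂, Finset.mem_filter, Finset.mem_filter]
    rcases le_max_iff.mp h1 with h | h
    · exact Or.inl ⟨Finset.mem_univ _, h⟩
    · exact Or.inr ⟨Finset.mem_univ _, h⟩
  have hkle : k ≤ (T₁ ∪ T₂).card := by
    have hinj : Injective (fun c : {c // c ∈ β.2.classes} =>
        (⟨G c, hmemT c⟩ : {i // i ∈ T₁ ∪ T₂})) := by
      intro c c' h
      exact hG (congrArg Subtype.val h)
    have := Nat.card_le_card_of_injective _ hinj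
    rw [Nat.card_eq_finsetCard] at this
    exact le_trans (le_of_eq hk) this
  have hlow₁ : ∀ i j : Fin K, i ≤ j → j ∈ T₁ → i ∈ T₁ := by
    intro i j hij hj
    rw [hT₁, Finset.mem_filter] at hj ⊢
    exact ⟨Finset.mem_univ _, le_trans hj.2 (hu'anti i j hij)⟩
  have hlow₂ : ∀ i j : Fin K, i ≤ j → j ∈ T₂ → i ∈ T₂ := by
    intro i j hij hj
    rw [hT₂, Finset.mem_filter] at hj ⊢
    exact ⟨Finset.mem_univ _, le_trans hj.2 (hv'anti i j hij)⟩
  rcases lower_comparable T₁ T₂ hlow₁ hlow₂ with hsub | hsub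
  · -- T₁ ⊆ T₂ : use ρ
    have hk2 : k ≤ T₂.card := by
      refine le_trans hkle (Finset.card_le_card ?_)
      exact Finset.union_subset hsub (Finset.Subset.refl _)
    obtain ⟨g, hg, hgsz⟩ := side_embed o₂ v' hv'pos hv'neg hm1 hk2
    exact hρ β hβ (embed_of_many_big_classes hunif hk.symm g hg hgsz)
  · -- T₂ ⊆ T₁ : use σ
    have hk1' : k ≤ T₁.card := by
      refine le_trans hkle (Finset.card_le_card ?_)
      exact Finset.union_subset (Finset.Subset.refl _) hsub
    obtain ⟨g, hg, hgsz⟩ := side_embed o₁ u' hu'pos hu'neg hm1 hk1'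
    exact hσ β hβ (embed_of_many_big_classes hunif hk.symm g hg hgsz)

end AvAux

/-- For a finite antichain (basis) `B`, the avoidance set `Av B` is atomic (has the
joint embedding property) iff every element of `B` is uniform. -/
theorem av_atomic_iff_uniform (B : Set EqRel) (hfin : B.Finite)
    (hanti : ∀ β₁ ∈ B, ∀ β₂ ∈ B, β₁ ≠ β₂ → ¬ EmbedLE β₁ β₂) :
    (∀ σ ∈ Av B, ∀ ρ ∈ Av B, ∃ θ ∈ Av B, EmbedLE σ θ ∧ EmbedLE ρ θ) ↔
      ∀ β ∈ B, Uniform β :=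
  ⟨AvAux.forward B hanti, AvAux.backward B⟩
end

section
/- The family of finite equivalence relations on linearly ordered sets {σ_n : n ≥ 3}, where σ_n is the equivalence relation on {1,...,n} whose classes are {1,n} and the singletons {2},...,{n-1}, forms an infinite antichain under the consecutive embedding order. Hence the poset of finite linearly ordered equivalence relations under consecutive embedding is not well quasi-ordered. -/
/-- The consecutive embedding order: `a ≤cons b` iff the points of `a` map to an
interval of consecutive points of `b`, preserving and reflecting the relation. -/
def ConsLE (a b : EqRel) : Prop :=
  ∃ k, k + a.1 ≤ b.1 ∧
    ∀ (x y : Fin a.1) (hx : k + x.1 < b.1) (hy : k + y.1 < b.1),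
      (a.2.r x y ↔ b.2.r ⟨k + x.1, hx⟩ ⟨k + y.1, hy⟩)

/-- `sigmaRel n` is the equivalence relation on `{0,...,n-1}` whose classes are
`{0, n-1}` together with the singletons `{1},...,{n-2}`. -/
def sigmaRel (n : ℕ) : Setoid (Fin n) where
  r a b := a = b ∨ (a.1 = 0 ∧ b.1 + 1 = n) ∨ (b.1 = 0 ∧ a.1 + 1 = n)
  iseqv := by
    constructor
    · intro a; left; rfl
    · intro a b h; tauto
    · intro a b c hab hbc
      have ha := a.isLt; have hb := b.isLt; have hc := c.isLt
      rcases hab with rfl | ⟨h1, h2⟩ | ⟨h1, h2⟩ <;>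
        rcases hbc with rfl | ⟨h3, h4⟩ | ⟨h3, h4⟩ <;>
        first
          | (left; rfl)
          | (left; exact Fin.ext (by omega))
          | (right; left; exact ⟨by omega, by omega⟩)
          | (right; right; exact ⟨by omega, by omega⟩)

/-- The `sigmaRel n` for `n ≥ 3` form an infinite antichain under consecutive
embedding; hence the poset of finite equivalence relations on linearly ordered
sets under consecutive embedding is not well quasi-ordered. -/
theorem sigmaRel_antichain_and_not_wqo :
    (∀ m n : ℕ, 3 ≤ m → 3 ≤ n → m ≠ n →
      ¬ ConsLE ⟨m, sigmaRel m⟩ ⟨n, sigmaRel n⟩) ∧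
    ¬ ∀ f : ℕ → EqRel, ∃ i j, i < j ∧ ConsLE (f i) (f j) := by
  have main : ∀ m n : ℕ, 3 ≤ m → 3 ≤ n → m ≠ n →
      ¬ ConsLE ⟨m, sigmaRel m⟩ ⟨n, sigmaRel n⟩ := by
    intro m n hm hn hmn ⟨k, hk, hrel⟩
    simp only at hk hrel
    have hx : k + (0 : ℕ) < n := by omega
    have hy : k + (m - 1) < n := by omega
    have hxy : (sigmaRel m).r ⟨0, by omega⟩ ⟨m - 1, by omega⟩ :=
      Or.inr (Or.inl ⟨rfl, by simp only [Fin.val_mk]; omega⟩)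
    have h := (hrel ⟨0, by omega⟩ ⟨m - 1, by omega⟩ hx hy).mp hxy
    rcases h with h | ⟨h1, h2⟩ | ⟨h1, h2⟩
    · have h' : k + 0 = k + (m - 1) := congrArg Fin.val h
      omega
    · simp only at h1 h2; omega
    · simp only at h1 h2; omega
  refine ⟨main, fun h => ?_⟩
  obtain ⟨i, j, hij, hc⟩ := h (fun n => ⟨n + 3, sigmaRel (n + 3)⟩)
  exact main (i + 3) (j + 3) (by omega) (by omega) (by omega) hc
end

section
/- For k-coloured equivalence relations on linearly ordered finite sets: two coloured equivalence relations whose underlying sets are intervals of ℕ satisfy σ^{c1} ≤_col ρ^{c2} if and only if the window-path Π'(σ^{c1}) is a subpath of Π'(ρ^{c2}) in the coloured factor graph; in particular, each path in the coloured factor graph has exactly one associated coloured equivalence relation. -/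
/-- A `k`-coloured equivalence relation on `{0,...,n-1}` is encoded by its colouring
function `c : Fin n → Fin k`: the equivalence classes are the fibres of `c`, and the
(injective) colouring assigns to each class its common colour.  The coloured
consecutive embedding order: there is a contiguous (interval) embedding matching
colours exactly. -/
def ColConsLE {n m k : ℕ} (c₁ : Fin n → Fin k) (c₂ : Fin m → Fin k) : Prop :=
  ∃ d, d + n ≤ m ∧ ∀ (x : Fin n) (hx : d + x.1 < m), c₁ x = c₂ ⟨d + x.1, hx⟩

/-- The length-`b` coloured window of `c` starting at position `i`. -/
def cwindow {n k : ℕ} (c : Fin n → Fin k) (b i : ℕ) (h : i + b ≤ n) : Fin b → Fin k :=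
  fun x => c ⟨i + x.1, by have := x.isLt; omega⟩

/-- The window path `Π'(c)`: the sequence of all length-`b` coloured windows. -/
def cwindows {n k : ℕ} (c : Fin n → Fin k) (b : ℕ) (h : b ≤ n) : List (Fin b → Fin k) :=
  List.ofFn fun i : Fin (n - b + 1) => cwindow c b i.1 (by have := i.isLt; omega)

theorem my_infix_iff {α : Type*} {L₁ L₂ : List α} :
    L₁ <:+: L₂ ↔ ∃ d, ∃ _ : d + L₁.length ≤ L₂.length,
      ∀ i (h : i < L₁.length), L₁[i] = L₂[d + i]'(by omega) := by
  constructor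
  · rintro ⟨s, t, rfl⟩
    refine ⟨s.length, by simp, fun i h => ?_⟩
    rw [List.getElem_append_left (by simp; omega), List.getElem_append_right (by simp)]
    simp
  · rintro ⟨d, hd, hget⟩
    have heq : L₁ = (L₂.drop d).take L₁.length := by
      apply List.ext_getElem
      · simp; omega
      · intro i h1 h2
        simp only [List.getElem_take, List.getElem_drop]
        exact hget i h1
    rw [heq]
    exact ((List.take_prefix _ _).isInfix).trans ((List.drop_suffix _ _).isInfix)

theorem window_ext {n m k : ℕ} (b d : ℕ) (hb : 0 < b) (hn : b ≤ n) (hdm : d + n ≤ m)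
    (c₁ : Fin n → Fin k) (c₂ : Fin m → Fin k)
    (hw : ∀ i (h : i + b ≤ n), ∀ (x : Fin b),
      c₁ ⟨i + x.1, by have := x.isLt; omega⟩ = c₂ ⟨d + i + x.1, by have := x.isLt; omega⟩) :
    ∀ (x : Fin n) (hx : d + x.1 < m), c₁ x = c₂ ⟨d + x.1, hx⟩ := by
  intro x hx
  have hxn := x.isLt
  set i := min x.1 (n - b) with hi
  have hi1 : i ≤ x.1 := min_le_left _ _
  have hi2 : i ≤ n - b := min_le_right _ _
  have h1 : i + b ≤ n := by omega
  have h2 : x.1 - i < b := by omega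
  have := hw i h1 ⟨x.1 - i, h2⟩
  have e1 : (⟨i + (x.1 - i), by omega⟩ : Fin n) = x := Fin.ext (by simp; omega)
  have e2 : (⟨d + i + (x.1 - i), by omega⟩ : Fin m) = ⟨d + x.1, hx⟩ := Fin.ext (by simp; omega)
  rwa [e1, e2] at this

/-- For coloured equivalence relations of length at least `b`:
`σ^{c₁} ≤_col ρ^{c₂}` iff the window path of `c₁` is a subpath of the window path
of `c₂`; in particular each window path is associated with exactly one coloured
equivalence relation. -/
theorem colConsLE_iff_windows_isInfix {k b n m : ℕ} (hb : 0 < b)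
    (hn : b ≤ n) (hm : b ≤ m) (c₁ : Fin n → Fin k) (c₂ : Fin m → Fin k) :
    (ColConsLE c₁ c₂ ↔ cwindows c₁ b hn <:+: cwindows c₂ b hm) ∧
      (∀ c₁' : Fin n → Fin k, cwindows c₁' b hn = cwindows c₁ b hn → c₁' = c₁) := by
  have len1 : (cwindows c₁ b hn).length = n - b + 1 := by simp [cwindows]
  have len2 : (cwindows c₂ b hm).length = m - b + 1 := by simp [cwindows]
  have getw : ∀ {n' : ℕ} (hn' : b ≤ n') (c : Fin n' → Fin k) (i : ℕ)
      (h : i < (cwindows c b hn').length),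
      (cwindows c b hn')[i] = cwindow c b i (by simp [cwindows] at h; omega) := by
    intro n' hn' c i h
    simp only [cwindows, List.getElem_ofFn]
  constructor
  · constructor
    · rintro ⟨d, hd, hc⟩
      rw [my_infix_iff]
      refine ⟨d, by omega, fun i h => ?_⟩
      
      rw [getw hn c₁ i h, getw hm c₂ (d + i) (by omega)]
      funext x
      simp only [cwindow]
      have := hc ⟨i + x.1, by have := x.isLt; rw [len1] at h; omega⟩
        (by have := x.isLt; omega)
      rw [this]
      exact congrArg c₂ (Fin.ext (by simp [Nat.add_assoc]))
    · rw [my_infix_iff]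
      rintro ⟨d, hd, hget⟩
      rw [len1, len2] at hd
      have hdm : d + n ≤ m := by omega
      refine ⟨d, hdm, window_ext b d hb hn hdm c₁ c₂ ?_⟩
      intro i h x
      have hi : i < (cwindows c₁ b hn).length := by rw [len1]; omega
      have := hget i hi
      rw [getw hn c₁ i hi, getw hm c₂ (d + i) (by rw [len2]; omega)] at this
      have := congrFun this x
      simpa [cwindow] using this
  · intro c₁' hw
    have h0 : ∀ i (h : i + b ≤ n), ∀ (x : Fin b),
        c₁' ⟨i + x.1, by have := x.isLt; omega⟩ = c₁ ⟨0 + i + x.1, by have := x.isLt; omega⟩ := by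
      intro i h x
      have hi : i < (cwindows c₁' b hn).length := by simp [cwindows]; omega
      have hi' : i < (cwindows c₁ b hn).length := by rw [len1]; omega
      have heq : cwindow c₁' b i h = cwindow c₁ b i h := by
        rw [← getw hn c₁' i hi, ← getw hn c₁ i hi']
        simp only [hw]
      have := congrFun heq x
      simp only [cwindow] at this
      rw [this]
      exact congrArg c₁ (Fin.ext (by simp))
    funext x
    have := window_ext b 0 hb hn (by omega) c₁' c₁ h0 x (by omega)
    rw [this]
    exact congrArg c₁ (Fin.ext (by simp))
end

section
/- The avoidance set Av(|1 2 3|4 5 6|) — all finite equivalence relations not embedding an equivalence relation with two classes of size 3 — is atomic under the (non-consecutive) embedding order: for any two members σ, ρ there is a member θ embedding both. -/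
/-- The equivalence relation on a 6-element set with two classes of size 3:
`|1 2 3|4 5 6|`. -/
def twoTriples : Setoid (Fin 6) where
  r a b := a.1 / 3 = b.1 / 3
  iseqv := ⟨fun _ => rfl, Eq.symm, Eq.trans⟩

lemma key {n : ℕ} (τ : Setoid (Fin n))
    (h : ¬ EmbedLE ⟨6, twoTriples⟩ ⟨n, τ⟩)
    {x y z x' y' z' : Fin n}
    (hxy : x ≠ y) (hxz : x ≠ z) (hyz : y ≠ z)
    (hxy' : x' ≠ y') (hxz' : x' ≠ z') (hyz' : y' ≠ z')
    (rxy : τ.r x y) (rxz : τ.r x z) (rxy' : τ.r x' y') (rxz' : τ.r x' z') :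
    τ.r x x' := by
  by_contra hc
  apply h
  have T : ∀ {a b c : Fin n}, τ.r a b → τ.r b c → τ.r a c :=
    fun h1 h2 => τ.iseqv.trans h1 h2
  have S : ∀ {a b : Fin n}, τ.r a b → τ.r b a := fun h1 => τ.iseqv.symm h1
  have ryz : τ.r y z := T (S rxy) rxz
  have ryz' : τ.r y' z' := T (S rxy') rxz'
  -- cross non-relations
  have n11 : ¬ τ.r x x' := hc
  have n12 : ¬ τ.r x y' := fun hr => hc (T hr (S rxy'))
  have n13 : ¬ τ.r x z' := fun hr => hc (T hr (S rxz'))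
  have n21 : ¬ τ.r y x' := fun hr => hc (T rxy hr)
  have n22 : ¬ τ.r y y' := fun hr => n12 (T rxy hr)
  have n23 : ¬ τ.r y z' := fun hr => n13 (T rxy hr)
  have n31 : ¬ τ.r z x' := fun hr => hc (T rxz hr)
  have n32 : ¬ τ.r z y' := fun hr => n12 (T rxz hr)
  have n33 : ¬ τ.r z z' := fun hr => n13 (T rxz hr)
  have n11' : ¬ τ.r x' x := fun hr => n11 (S hr)
  have n12' : ¬ τ.r y' x := fun hr => n12 (S hr)
  have n13' : ¬ τ.r z' x := fun hr => n13 (S hr)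
  have n21' : ¬ τ.r x' y := fun hr => n21 (S hr)
  have n22' : ¬ τ.r y' y := fun hr => n22 (S hr)
  have n23' : ¬ τ.r z' y := fun hr => n23 (S hr)
  have n31' : ¬ τ.r x' z := fun hr => n31 (S hr)
  have n32' : ¬ τ.r y' z := fun hr => n32 (S hr)
  have n33' : ¬ τ.r z' z := fun hr => n33 (S hr)
  have d11 : x ≠ x' := fun e => n11 (e ▸ τ.iseqv.refl x)
  have d12 : x ≠ y' := fun e => n12 (e ▸ τ.iseqv.refl x)
  have d13 : x ≠ z' := fun e => n13 (e ▸ τ.iseqv.refl x)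
  have d21 : y ≠ x' := fun e => n21 (e ▸ τ.iseqv.refl y)
  have d22 : y ≠ y' := fun e => n22 (e ▸ τ.iseqv.refl y)
  have d23 : y ≠ z' := fun e => n23 (e ▸ τ.iseqv.refl y)
  have d31 : z ≠ x' := fun e => n31 (e ▸ τ.iseqv.refl z)
  have d32 : z ≠ y' := fun e => n32 (e ▸ τ.iseqv.refl z)
  have d33 : z ≠ z' := fun e => n33 (e ▸ τ.iseqv.refl z)
  have ryx := S rxy
  have rzx := S rxz
  have rzy := S ryz
  have ryx' := S rxy'
  have rzx' := S rxz'
  have rzy' := S ryz'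
  refine ⟨![x, y, z, x', y', z'], ?_, ?_⟩
  · intro i j hij
    fin_cases i <;> fin_cases j <;> simp at hij <;>
      first
        | rfl
        | exact absurd hij (by assumption)
        | exact absurd hij.symm (by assumption)
  · intro i j
    fin_cases i <;> fin_cases j <;>
      first
        | exact iff_of_true rfl (by first | exact τ.iseqv.refl _ | assumption)
        | exact iff_of_false (fun hh => by have h' : (_ : Fin 6).1 / 3 = (_ : Fin 6).1 / 3 := hh; revert h'; decide) (by assumption)
open Classical in
noncomputable def anchor {n : ℕ} (τ : Setoid (Fin n)) (hn : 0 < n) : Fin n :=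
  if h : ∃ p : Fin n × Fin n × Fin n, p.1 ≠ p.2.1 ∧ p.1 ≠ p.2.2 ∧ p.2.1 ≠ p.2.2 ∧
      τ.r p.1 p.2.1 ∧ τ.r p.1 p.2.2 then h.choose.1 else ⟨0, hn⟩

lemma anchor_spec {n : ℕ} (τ : Setoid (Fin n))
    (h : ¬ EmbedLE ⟨6, twoTriples⟩ ⟨n, τ⟩) (hn : 0 < n)
    {x y z : Fin n} (hxy : x ≠ y) (hxz : x ≠ z) (hyz : y ≠ z)
    (rxy : τ.r x y) (rxz : τ.r x z) : τ.r x (anchor τ hn) := by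
  have hex : ∃ p : Fin n × Fin n × Fin n, p.1 ≠ p.2.1 ∧ p.1 ≠ p.2.2 ∧ p.2.1 ≠ p.2.2 ∧
      τ.r p.1 p.2.1 ∧ τ.r p.1 p.2.2 := ⟨(x, y, z), hxy, hxz, hyz, rxy, rxz⟩
  have hs := hex.choose_spec
  unfold anchor
  rw [dif_pos hex]
  exact key τ h hxy hxz hyz hs.1 hs.2.1 hs.2.2.1 rxy rxz hs.2.2.2.1 hs.2.2.2.2

section Merge

variable {n m : ℕ} (σ : Setoid (Fin n)) (ρ : Setoid (Fin m)) (a₀ : Fin n) (b₀ : Fin m)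

def mergeRel : (Fin n ⊕ Fin m) → (Fin n ⊕ Fin m) → Prop
  | Sum.inl u, Sum.inl v => σ.r u v
  | Sum.inl u, Sum.inr v => σ.r u a₀ ∧ ρ.r v b₀
  | Sum.inr u, Sum.inl v => ρ.r u b₀ ∧ σ.r v a₀
  | Sum.inr u, Sum.inr v => ρ.r u v

lemma mergeRel_equiv : Equivalence (mergeRel σ ρ a₀ b₀) := by
  constructor
  · rintro (u | u)
    · exact σ.iseqv.refl u
    · exact ρ.iseqv.refl u
  · rintro (u | u) (v | v) h
    · exact σ.iseqv.symm h
    · exact ⟨h.2, h.1⟩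
    · exact ⟨h.2, h.1⟩
    · exact ρ.iseqv.symm h
  · rintro (u | u) (v | v) (w | w) h1 h2
    · exact σ.iseqv.trans h1 h2
    · exact ⟨σ.iseqv.trans h1 h2.1, h2.2⟩
    · exact σ.iseqv.trans h1.1 (σ.iseqv.symm h2.2)
    · exact ⟨h1.1, ρ.iseqv.trans (ρ.iseqv.symm h2) h1.2⟩
    · exact ⟨h1.1, σ.iseqv.trans (σ.iseqv.symm h2) h1.2⟩
    · exact ρ.iseqv.trans h1.1 (ρ.iseqv.symm h2.2)
    · exact ⟨ρ.iseqv.trans h1 h2.1, h2.2⟩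
    · exact ρ.iseqv.trans h1 h2

/-- The merged class predicate. -/
def mergeM : (Fin n ⊕ Fin m) → Prop
  | Sum.inl u => σ.r u a₀
  | Sum.inr u => ρ.r u b₀

end Merge
section Merge2

variable {n m : ℕ} (σ : Setoid (Fin n)) (ρ : Setoid (Fin m))

noncomputable def mergeSetoid (a₀ : Fin n) (b₀ : Fin m) : Setoid (Fin (n + m)) :=
  Setoid.comap finSumFinEquiv.symm ⟨mergeRel σ ρ a₀ b₀, mergeRel_equiv σ ρ a₀ b₀⟩

lemma merge_big (hs : ¬ EmbedLE ⟨6, twoTriples⟩ ⟨n, σ⟩)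
    (ht : ¬ EmbedLE ⟨6, twoTriples⟩ ⟨m, ρ⟩) (hn : 0 < n) (hm : 0 < m)
    {x y z : Fin n ⊕ Fin m} (hxy : x ≠ y) (hxz : x ≠ z) (hyz : y ≠ z)
    (r1 : mergeRel σ ρ (anchor σ hn) (anchor ρ hm) x y)
    (r2 : mergeRel σ ρ (anchor σ hn) (anchor ρ hm) x z) :
    mergeM σ ρ (anchor σ hn) (anchor ρ hm) x := by
  rcases x with u | u <;> rcases y with v | v <;> rcases z with w | w
  · exact anchor_spec σ hs hn (fun e => hxy (by rw [e])) (fun e => hxz (by rw [e]))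
      (fun e => hyz (by rw [e])) r1 r2
  · exact r2.1
  · exact r1.1
  · exact r1.1
  · exact r1.1
  · exact r1.1
  · exact r2.1
  · exact anchor_spec ρ ht hm (fun e => hxy (by rw [e])) (fun e => hxz (by rw [e]))
      (fun e => hyz (by rw [e])) r1 r2

lemma merge_of_M {a₀ : Fin n} {b₀ : Fin m} {x y : Fin n ⊕ Fin m}
    (hx : mergeM σ ρ a₀ b₀ x) (hy : mergeM σ ρ a₀ b₀ y) : mergeRel σ ρ a₀ b₀ x y := by
  rcases x with u | u <;> rcases y with v | v
  · exact σ.iseqv.trans hx (σ.iseqv.symm hy)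
  · exact ⟨hx, hy⟩
  · exact ⟨hx, hy⟩
  · exact ρ.iseqv.trans hx (ρ.iseqv.symm hy)

lemma merge_avoid (hs : ¬ EmbedLE ⟨6, twoTriples⟩ ⟨n, σ⟩)
    (ht : ¬ EmbedLE ⟨6, twoTriples⟩ ⟨m, ρ⟩) (hn : 0 < n) (hm : 0 < m) :
    ¬ EmbedLE ⟨6, twoTriples⟩ ⟨n + m, mergeSetoid σ ρ (anchor σ hn) (anchor ρ hm)⟩ := by
  rintro ⟨g, ginj, giff⟩
  have g'inj : Function.Injective (fun i => finSumFinEquiv.symm (g i)) :=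
    fun a b h => ginj (finSumFinEquiv.symm.injective h)
  have rel : ∀ i j : Fin 6, twoTriples.r i j →
      mergeRel σ ρ (anchor σ hn) (anchor ρ hm) (finSumFinEquiv.symm (g i))
        (finSumFinEquiv.symm (g j)) :=
    fun i j hij => (giff i j).1 hij
  have d : ∀ i j : Fin 6, i ≠ j →
      (finSumFinEquiv.symm (g i) : Fin n ⊕ Fin m) ≠ finSumFinEquiv.symm (g j) :=
    fun i j hij e => hij (g'inj e)
  have M0 := merge_big σ ρ hs ht hn hm (d 0 1 (by decide)) (d 0 2 (by decide))
    (d 1 2 (by decide)) (rel 0 1 rfl) (rel 0 2 rfl)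
  have M3 := merge_big σ ρ hs ht hn hm (d 3 4 (by decide)) (d 3 5 (by decide))
    (d 4 5 (by decide)) (rel 3 4 rfl) (rel 3 5 rfl)
  have hrel : mergeRel σ ρ (anchor σ hn) (anchor ρ hm) (finSumFinEquiv.symm (g 0))
      (finSumFinEquiv.symm (g 3)) := merge_of_M σ ρ M0 M3
  have h03 : twoTriples.r 0 3 := (giff 0 3).2 hrel
  exact absurd (show (0 : Fin 6).1 / 3 = (3 : Fin 6).1 / 3 from h03) (by decide)

end Merge2

/-- `Av(|1 2 3|4 5 6|)` is atomic: it has the joint embedding property. -/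
theorem av_twoTriples_atomic :
    ∀ σ ∈ Av {(⟨6, twoTriples⟩ : EqRel)}, ∀ ρ ∈ Av {(⟨6, twoTriples⟩ : EqRel)},
      ∃ θ ∈ Av {(⟨6, twoTriples⟩ : EqRel)}, EmbedLE σ θ ∧ EmbedLE ρ θ := by
  intro σ hσ ρ hρ
  obtain ⟨n, s⟩ := σ
  obtain ⟨m, t⟩ := ρ
  have hs : ¬ EmbedLE ⟨6, twoTriples⟩ ⟨n, s⟩ := hσ _ rfl
  have ht : ¬ EmbedLE ⟨6, twoTriples⟩ ⟨m, t⟩ := hρ _ rfl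
  have selfEmb : ∀ (a : EqRel), EmbedLE a a := fun a => ⟨id, fun _ _ h => h, fun _ _ => Iff.rfl⟩
  rcases Nat.eq_zero_or_pos n with hn | hn
  · subst hn
    exact ⟨⟨m, t⟩, hρ, ⟨fun x => x.elim0, fun x => x.elim0, fun x => x.elim0⟩, selfEmb _⟩
  rcases Nat.eq_zero_or_pos m with hm | hm
  · subst hm
    exact ⟨⟨n, s⟩, hσ, selfEmb _, ⟨fun x => x.elim0, fun x => x.elim0, fun x => x.elim0⟩⟩
  refine ⟨⟨n + m, mergeSetoid s t (anchor s hn) (anchor t hm)⟩, ?_, ?_, ?_⟩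
  · intro β hβ
    replace hβ : β = ⟨6, twoTriples⟩ := hβ
    subst hβ
    exact merge_avoid s t hs ht hn hm
  · refine ⟨fun u => finSumFinEquiv (Sum.inl u),
      fun u v h => Sum.inl_injective (finSumFinEquiv.injective h), fun u v => ?_⟩
    show s.r u v ↔ mergeRel s t _ _ (finSumFinEquiv.symm (finSumFinEquiv (Sum.inl u)))
      (finSumFinEquiv.symm (finSumFinEquiv (Sum.inl v)))
    rw [Equiv.symm_apply_apply, Equiv.symm_apply_apply]
    exact Iff.rfl
  · refine ⟨fun u => finSumFinEquiv (Sum.inr u),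
      fun u v h => Sum.inr_injective (finSumFinEquiv.injective h), fun u v => ?_⟩
    show t.r u v ↔ mergeRel s t _ _ (finSumFinEquiv.symm (finSumFinEquiv (Sum.inr u)))
      (finSumFinEquiv.symm (finSumFinEquiv (Sum.inr v)))
    rw [Equiv.symm_apply_apply, Equiv.symm_apply_apply]
    exact Iff.rfl
end

section
/- Every equivalence relation σ whose class-size sequence in decreasing order is (a_1,...,a_k), and every equivalence relation ρ with decreasing class-size sequence (b_1,...,b_l) with l ≤ k, both embed into the equivalence relation γ with decreasing class-size sequence (c_1,...,c_k) where c_i = max(a_i, b_i) for i ≤ l and c_i = a_i for i > l. Moreover, if θ is a uniform equivalence relation (all classes the same size) that embeds into γ, then θ embeds into σ or into ρ. -/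
/-- The sequence of class sizes of `ρ` in weakly decreasing order. -/
noncomputable def piSeq {X : Type*} [Fintype X] (ρ : Setoid X) : List ℕ :=
  (Multiset.sort ((Setoid.classes ρ).toFinite.toFinset.val.map Set.ncard) (· ≤ ·)).reverse

section Helpers
variable {X : Type*} [Fintype X] (ρ : Setoid X)

lemma piSeq_coe : (↑(piSeq ρ) : Multiset ℕ)
    = (Setoid.classes ρ).toFinite.toFinset.val.map Set.ncard := by
  rw [piSeq, Multiset.coe_reverse, Multiset.sort_eq]

lemma piSeq_sorted : (piSeq ρ).Pairwise (· ≥ ·) := by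
  rw [piSeq]
  have h := Multiset.pairwise_sort ((Setoid.classes ρ).toFinite.toFinset.val.map Set.ncard) (· ≤ ·)
  exact List.pairwise_reverse.2 (h.imp fun {a b} hab => hab)

lemma piSeq_anti {i j : ℕ} (hij : i ≤ j) :
    (piSeq ρ).getD j 0 ≤ (piSeq ρ).getD i 0 := by
  rcases lt_or_ge j (piSeq ρ).length with hj | hj
  · have hi : i < (piSeq ρ).length := lt_of_le_of_lt hij hj
    rw [List.getD_eq_get _ _ ⟨_, hj⟩, List.getD_eq_get _ _ ⟨_, hi⟩]
    rcases eq_or_lt_of_le hij with rfl | hlt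
    · exact le_refl _
    · exact List.pairwise_iff_get.1 (piSeq_sorted ρ) ⟨i, hi⟩ ⟨j, hj⟩ hlt
  · rw [List.getD_eq_default _ _ hj]
    exact Nat.zero_le _

lemma mem_piSeq {x : ℕ} (hx : x ∈ piSeq ρ) : ∃ c ∈ Setoid.classes ρ, c.ncard = x := by
  have : x ∈ (↑(piSeq ρ) : Multiset ℕ) := hx
  rw [piSeq_coe] at this
  obtain ⟨c, hc, rfl⟩ := Multiset.mem_map.1 this
  exact ⟨c, (Set.Finite.mem_toFinset _).1 hc, rfl⟩

lemma piSeq_pos {x : ℕ} (hx : x ∈ piSeq ρ) : 0 < x := by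
  obtain ⟨c, hc, rfl⟩ := mem_piSeq ρ hx
  obtain ⟨y, rfl⟩ := hc
  exact (Set.ncard_pos (Set.toFinite _)).2 ⟨y, ρ.refl y⟩

lemma length_piSeq : (piSeq ρ).length
    = (Setoid.classes ρ).toFinite.toFinset.card := by
  have := congrArg Multiset.card (piSeq_coe ρ)
  simpa using this


lemma exists_list_of_map {α : Type*} (L : List ℕ) (s : Multiset α) (f : α → ℕ)
    (h : s.map f = ↑L) : ∃ Cs : List α, (↑Cs : Multiset α) = s ∧ Cs.map f = L := by
  induction L generalizing s with
  | nil =>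
      refine ⟨[], ?_, rfl⟩
      have h0 : s = 0 := Multiset.map_eq_zero.mp (show s.map f = 0 by simpa using h)
      simp [h0]
  | cons a L ih =>
      have ha : a ∈ s.map f := by rw [h]; simp
      obtain ⟨c, hc, hfc⟩ := Multiset.mem_map.1 ha
      obtain ⟨s', rfl⟩ := Multiset.exists_cons_of_mem hc
      rw [Multiset.map_cons, hfc] at h
      have h' : s'.map f = ↑L := by
        have h2 : a ::ₘ s'.map f = a ::ₘ (↑L : Multiset ℕ) := by simpa using h
        exact (Multiset.cons_inj_right a).1 h2
      obtain ⟨Cs, hCs, hmap⟩ := ih s' h'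
      exact ⟨c :: Cs, by rw [← hCs]; rfl, by simp [hmap, hfc]⟩

/-- A list of the classes of `ρ`, in an order matching `piSeq ρ`. -/
lemma exists_class_list : ∃ Cs : List (Set X),
    (↑Cs : Multiset (Set X)) = (Setoid.classes ρ).toFinite.toFinset.val ∧
    Cs.map Set.ncard = piSeq ρ := by
  exact exists_list_of_map (piSeq ρ) _ Set.ncard (piSeq_coe ρ).symm

end Helpers

lemma embed_of_le (a b : EqRel)
    (h : ∀ i, i < (piSeq a.2).length → (piSeq a.2).getD i 0 ≤ (piSeq b.2).getD i 0) :
    EmbedLE a b := by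
  classical
  obtain ⟨Ca, hCa, hCamap⟩ := exists_class_list a.2
  obtain ⟨Cb, hCb, hCbmap⟩ := exists_class_list b.2
  have hlena : Ca.length = (piSeq a.2).length := by rw [← hCamap]; simp
  have hlenb : Cb.length = (piSeq b.2).length := by rw [← hCbmap]; simp
  have hlen : (piSeq a.2).length ≤ (piSeq b.2).length := by
    by_contra hlt
    push_neg at hlt
    have hj : (piSeq b.2).length < (piSeq a.2).length := hlt
    have h1 := h _ hj
    rw [List.getD_eq_get _ _ ⟨_, hj⟩, List.getD_eq_default _ _ (le_refl _)] at h1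
    have h2 : 0 < (piSeq a.2).get ⟨_, hj⟩ := piSeq_pos _ (List.get_mem _ _)
    omega
  have hmemCa : ∀ i : Fin Ca.length, Ca.get i ∈ a.2.classes := by
    intro i
    have h1 : Ca.get i ∈ (↑Ca : Multiset (Set (Fin a.1))) := List.get_mem _ _
    rw [hCa] at h1
    exact (Set.Finite.mem_toFinset _).1 h1
  have hmemCb : ∀ j : Fin Cb.length, Cb.get j ∈ b.2.classes := by
    intro j
    have h1 : Cb.get j ∈ (↑Cb : Multiset (Set (Fin b.1))) := List.get_mem _ _
    rw [hCb] at h1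
    exact (Set.Finite.mem_toFinset _).1 h1
  have hnodupb : Cb.Nodup := by
    have h1 : (↑Cb : Multiset (Set (Fin b.1))).Nodup := hCb ▸ (Setoid.classes b.2).toFinite.toFinset.nodup
    exact h1
  -- the index-shift map
  have hCalen : Ca.length ≤ Cb.length := by omega
  let iCb : Fin Ca.length → Fin Cb.length := fun i => ⟨i.1, lt_of_lt_of_le i.2 hCalen⟩
  -- cardinality comparison
  have hcard : ∀ i : Fin Ca.length, (Ca.get i).ncard ≤ (Cb.get (iCb i)).ncard := by
    intro i
    have h1 : (piSeq a.2).getD i.1 0 = (Ca.get i).ncard := by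
      rw [← hCamap, List.getD_eq_get _ _ ⟨i.1, by simpa using i.2⟩]
      simp
    have h2 : (piSeq b.2).getD i.1 0 = (Cb.get (iCb i)).ncard := by
      rw [← hCbmap, List.getD_eq_get _ _ ⟨i.1, by simp only [List.length_map]; exact (iCb i).2⟩]
      simp [iCb]
    rw [← h1, ← h2]
    exact h i.1 (hlena ▸ i.2)
  -- embeddings between classes
  have hne : ∀ i : Fin Ca.length, Nonempty (↥(Ca.get i) ↪ ↥(Cb.get (iCb i))) := by
    intro i
    haveI : Fintype ↥(Ca.get i) := Fintype.ofFinite _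
    haveI : Fintype ↥(Cb.get (iCb i)) := Fintype.ofFinite _
    apply Function.Embedding.nonempty_of_card_le
    rw [← Nat.card_eq_fintype_card, ← Nat.card_eq_fintype_card,
      Nat.card_coe_set_eq, Nat.card_coe_set_eq]
    exact hcard i
  let E : ∀ i : Fin Ca.length, ↥(Ca.get i) ↪ ↥(Cb.get (iCb i)) := fun i => (hne i).some
  -- the class and index of an element
  let cls : Fin a.1 → Set (Fin a.1) := fun x => {z | a.2.r z x}
  have hclsCa : ∀ x, cls x ∈ Ca := by
    intro x
    have h1 : cls x ∈ (↑Ca : Multiset (Set (Fin a.1))) := by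
      rw [hCa]
      exact (Set.Finite.mem_toFinset _).2 (Setoid.mem_classes a.2 x)
    exact h1
  let idx : Fin a.1 → Fin Ca.length := fun x =>
    ⟨Ca.idxOf (cls x), List.idxOf_lt_length_iff.2 (hclsCa x)⟩
  have hidx : ∀ x, Ca.get (idx x) = cls x := fun x => List.idxOf_get _
  have hmem : ∀ x, x ∈ Ca.get (idx x) := by
    intro x
    rw [hidx]
    exact a.2.refl x
  let f : Fin a.1 → Fin b.1 := fun x => (E (idx x) ⟨x, hmem x⟩).1
  have hfmem : ∀ x, f x ∈ Cb.get (iCb (idx x)) := fun x => (E (idx x) ⟨x, hmem x⟩).2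
  -- generalized injectivity step
  have step : ∀ (i j : Fin Ca.length) (_ : i = j) (u v : Fin a.1)
      (hu : u ∈ Ca.get i) (hv : v ∈ Ca.get j),
      (E i ⟨u, hu⟩).1 = (E j ⟨v, hv⟩).1 → u = v := by
    rintro i j rfl u v hu hv huv
    have := (E i).injective (Subtype.ext huv)
    exact congrArg Subtype.val this
  -- same b-class implies same index
  have idx_eq : ∀ x y, Cb.get (iCb (idx x)) = Cb.get (iCb (idx y)) → idx x = idx y := by
    intro x y hxy
    have h1 := List.nodup_iff_injective_get.1 hnodupb hxy
    have h2 : (iCb (idx x)).1 = (iCb (idx y)).1 := congrArg Fin.val h1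
    exact Fin.ext h2
  have cls_eq_of_idx : ∀ x y, idx x = idx y → cls x = cls y := by
    intro x y hxy
    rw [← hidx x, ← hidx y, hxy]
  refine ⟨f, ?_, ?_⟩
  · intro x y hxy
    have hcc : Cb.get (iCb (idx x)) = Cb.get (iCb (idx y)) :=
      Setoid.eq_of_mem_classes (hmemCb _) (hfmem x) (hmemCb _) (hxy ▸ hfmem y)
    have he : idx x = idx y := idx_eq x y hcc
    exact step (idx x) (idx y) he x y (hmem x) (hmem y) hxy
  · intro x y
    constructor
    · intro hr
      have hcls : cls x = cls y := by
        ext z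
        exact ⟨fun hz => a.2.trans hz hr, fun hz => a.2.trans hz (a.2.symm hr)⟩
      have he : idx x = idx y := by
        simp only [idx, hcls]
      have h1 : f y ∈ Cb.get (iCb (idx x)) := by rw [he]; exact hfmem y
      exact (Setoid.rel_iff_exists_classes _).2
        ⟨Cb.get (iCb (idx x)), hmemCb _, hfmem x, h1⟩
    · intro hr
      obtain ⟨c, hc, hfx, hfy⟩ := (Setoid.rel_iff_exists_classes _).1 hr
      have e1 : c = Cb.get (iCb (idx x)) :=
        Setoid.eq_of_mem_classes hc hfx (hmemCb _) (hfmem x)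
      have e2 : c = Cb.get (iCb (idx y)) :=
        Setoid.eq_of_mem_classes hc hfy (hmemCb _) (hfmem y)
      have he : idx x = idx y := idx_eq x y (e1 ▸ e2)
      have hcls : cls x = cls y := cls_eq_of_idx x y he
      have : x ∈ cls y := hcls ▸ (a.2.refl x : x ∈ cls x)
      exact this

lemma sorted_countP_le {L : List ℕ} (hs : L.Pairwise (· ≥ ·)) {m i : ℕ} (hi : i < L.length)
    (h : L.get ⟨i, hi⟩ < m) : L.countP (fun x => decide (m ≤ x)) ≤ i := by
  have hdrop : (L.drop i).countP (fun x => decide (m ≤ x)) = 0 := by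
    rw [List.countP_eq_zero]
    intro x hx
    obtain ⟨j, hjlt, hj⟩ := List.mem_iff_getElem.1 hx
    have hjlt' : j < L.length - i := by simpa using hjlt
    have hlt : i + j < L.length := by omega
    have hxe : x = L[i + j]'hlt := by
      rw [← hj, List.getElem_drop]
    have hle : L[i + j]'hlt ≤ L.get ⟨i, hi⟩ := by
      rcases Nat.eq_zero_or_pos j with hj0 | hj0
      · simp [hj0, List.get_eq_getElem]
      · exact List.pairwise_iff_get.1 hs ⟨i, hi⟩ ⟨i + j, hlt⟩ (by simp; omega)
    simp only [decide_eq_true_eq]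
    omega
  calc L.countP (fun x => decide (m ≤ x))
      = (L.take i ++ L.drop i).countP (fun x => decide (m ≤ x)) := by rw [List.take_append_drop]
    _ = (L.take i).countP _ + (L.drop i).countP _ := List.countP_append
    _ ≤ (L.take i).length + 0 := by rw [hdrop]; exact Nat.add_le_add_right List.countP_le_length 0
    _ ≤ i := by simp [List.length_take]

lemma count_ge_of_embed (θ γ : EqRel) (m : ℕ) (hm : ∀ c ∈ θ.2.classes, m ≤ c.ncard)
    (hE : EmbedLE θ γ) :
    (piSeq θ.2).length ≤ List.countP (fun x => decide (m ≤ x)) (piSeq γ.2) := by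
  classical
  obtain ⟨f, hfinj, hfrel⟩ := hE
  set Fθ := (Setoid.classes θ.2).toFinite.toFinset with hFθ
  set Fγ := (Setoid.classes γ.2).toFinite.toFinset with hFγ
  let Φ : Set (Fin θ.1) → Set (Fin γ.1) := fun c => {z | ∃ x ∈ c, γ.2.r z (f x)}
  have hΦeq : ∀ c ∈ θ.2.classes, ∀ x₀ ∈ c, Φ c = {z | γ.2.r z (f x₀)} := by
    intro c hc x₀ hx₀
    ext z
    constructor
    · rintro ⟨x, hx, hz⟩
      have hθ : θ.2.r x x₀ := (Setoid.rel_iff_exists_classes _).2 ⟨c, hc, hx, hx₀⟩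
      exact γ.2.trans hz ((hfrel x x₀).1 hθ)
    · intro hz
      exact ⟨x₀, hx₀, hz⟩
  have hne : ∀ c ∈ θ.2.classes, ∃ x, x ∈ c := by
    rintro c ⟨y, rfl⟩
    exact ⟨y, θ.2.refl y⟩
  have hΦcls : ∀ c ∈ θ.2.classes, Φ c ∈ γ.2.classes := by
    intro c hc
    obtain ⟨x₀, hx₀⟩ := hne c hc
    rw [hΦeq c hc x₀ hx₀]
    exact Setoid.mem_classes γ.2 (f x₀)
  have hfmemΦ : ∀ c, ∀ x ∈ c, f x ∈ Φ c := fun c x hx => ⟨x, hx, γ.2.refl (f x)⟩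
  have hΦcard : ∀ c ∈ θ.2.classes, m ≤ (Φ c).ncard := by
    intro c hc
    have h1 : f '' c ⊆ Φ c := by
      rintro _ ⟨x, hx, rfl⟩
      exact hfmemΦ c x hx
    calc m ≤ c.ncard := hm c hc
      _ = (f '' c).ncard := (Set.ncard_image_of_injective c hfinj).symm
      _ ≤ (Φ c).ncard := Set.ncard_le_ncard h1 (Set.toFinite _)
  have hΦinj : Set.InjOn Φ ↑Fθ := by
    intro c hc c' hc' heq
    rw [hFθ, Set.Finite.coe_toFinset] at hc hc'
    obtain ⟨x, hx⟩ := hne c hc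
    obtain ⟨y, hy⟩ := hne c' hc'
    have h1 : f x ∈ Φ c' := heq ▸ hfmemΦ c x hx
    have h2 : γ.2.r (f x) (f y) :=
      (Setoid.rel_iff_exists_classes _).2 ⟨Φ c', hΦcls c' hc', h1, hfmemΦ c' y hy⟩
    have h3 : θ.2.r x y := (hfrel x y).2 h2
    obtain ⟨d, hd, hxd, hyd⟩ := (Setoid.rel_iff_exists_classes _).1 h3
    calc c = d := Setoid.eq_of_mem_classes hc hx hd hxd
      _ = c' := Setoid.eq_of_mem_classes hd hyd hc' hy
  have hcard : Fθ.card ≤ (Fγ.filter (fun C => m ≤ C.ncard)).card := by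
    apply Finset.card_le_card_of_injOn Φ _ hΦinj
    intro c hc
    rw [hFθ, Finset.mem_coe, Set.Finite.mem_toFinset] at hc
    rw [Finset.mem_coe, Finset.mem_filter, hFγ, Set.Finite.mem_toFinset]
    exact ⟨hΦcls c hc, hΦcard c hc⟩
  have hcount : List.countP (fun x => decide (m ≤ x)) (piSeq γ.2)
      = (Fγ.filter (fun C => m ≤ C.ncard)).card := by
    have h1 : Multiset.countP (fun x => m ≤ x) (↑(piSeq γ.2) : Multiset ℕ)
        = List.countP (fun x => decide (m ≤ x)) (piSeq γ.2) := Multiset.coe_countP _ _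
    rw [← h1, piSeq_coe, Multiset.countP_map]
    rw [Finset.card_def, Finset.filter_val]
  rw [hcount, length_piSeq]
  exact hcard


/-- If `σ` has decreasing class-size sequence `(a_1,...,a_k)`, `ρ` has decreasing
class-size sequence `(b_1,...,b_l)` with `l ≤ k`, and `γ` has class-size sequence
`(c_1,...,c_k)` with `c_i = max(a_i, b_i)` for `i ≤ l` and `c_i = a_i` for `i > l`,
then `σ` and `ρ` both embed into `γ`; moreover any uniform equivalence relation
embedding into `γ` embeds into `σ` or into `ρ`. -/
theorem embeds_into_max_and_uniform_splits (σ ρ γ : EqRel)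
    (hlen : (piSeq ρ.2).length ≤ (piSeq σ.2).length)
    (hγ : piSeq γ.2 = List.ofFn fun i : Fin (piSeq σ.2).length =>
        max ((piSeq σ.2).get i) ((piSeq ρ.2).getD (i : ℕ) 0)) :
    EmbedLE σ γ ∧ EmbedLE ρ γ ∧
      ∀ θ : EqRel, Uniform θ → EmbedLE θ γ → EmbedLE θ σ ∨ EmbedLE θ ρ := by
  set k := (piSeq σ.2).length with hk
  have hClen : (piSeq γ.2).length = k := by rw [hγ]; simp [hk]
  have hCget : ∀ j, j < k → (piSeq γ.2).getD j 0
      = max ((piSeq σ.2).getD j 0) ((piSeq ρ.2).getD j 0) := by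
    intro j hj
    rw [hγ, List.getD_eq_get _ _ ⟨j, by simpa using hj⟩, List.get_ofFn,
      List.getD_eq_get _ _ ⟨j, hj⟩]
    rfl
  refine ⟨?_, ?_, ?_⟩
  · apply embed_of_le
    intro i hi
    rw [hCget i hi]
    exact le_max_left _ _
  · apply embed_of_le
    intro i hi
    rw [hCget i (lt_of_lt_of_le hi hlen)]
    exact le_max_right _ _
  · intro θ hu hEθ
    set t := (piSeq θ.2).length with htdef
    by_cases ht : t = 0
    · left
      apply embed_of_le
      intro i hi
      omega
    · -- the common class size of θ
      have htpos : 0 < t := Nat.pos_of_ne_zero ht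
      set m := (piSeq θ.2).get ⟨0, htpos⟩ with hmdef
      have hall : ∀ x ∈ piSeq θ.2, x = m := by
        intro x hx
        obtain ⟨c, hc, rfl⟩ := mem_piSeq θ.2 hx
        obtain ⟨c₀, hc₀, hc₀e⟩ := mem_piSeq θ.2 (List.get_mem _ ⟨0, htpos⟩)
        rw [hmdef, ← hc₀e]
        exact hu c hc c₀ hc₀
      have hmcls : ∀ c ∈ θ.2.classes, m ≤ c.ncard := by
        intro c hc
        have h1 : c.ncard ∈ piSeq θ.2 := by
          have : c.ncard ∈ (↑(piSeq θ.2) : Multiset ℕ) := by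
            rw [piSeq_coe]
            exact Multiset.mem_map.2 ⟨c, (Set.Finite.mem_toFinset _).2 hc, rfl⟩
          exact this
        rw [hall _ h1]
      have hcount := count_ge_of_embed θ γ m hmcls hEθ
      have htk : t ≤ k := by
        calc t ≤ List.countP (fun x => decide (m ≤ x)) (piSeq γ.2) := hcount
          _ ≤ (piSeq γ.2).length := List.countP_le_length
          _ = k := hClen
      have hCge : ∀ i, i < t → m ≤ (piSeq γ.2).getD i 0 := by
        intro i hi
        by_contra hc
        push_neg at hc
        have hik : i < (piSeq γ.2).length := by omega
        rw [List.getD_eq_get _ _ ⟨_, hik⟩] at hc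
        have := sorted_countP_le (piSeq_sorted γ.2) hik hc
        omega
      have hθget : ∀ i, i < t → (piSeq θ.2).getD i 0 = m := by
        intro i hi
        rw [List.getD_eq_get _ _ ⟨_, hi⟩]
        exact hall _ (List.get_mem _ _)
      by_cases hA : ∀ i, i < t → m ≤ (piSeq σ.2).getD i 0
      · left
        apply embed_of_le
        intro i hi
        rw [hθget i hi]
        exact hA i hi
      · right
        push_neg at hA
        obtain ⟨i₀, hi₀t, hi₀⟩ := hA
        have key : ∀ j, j < t → i₀ ≤ j → m ≤ (piSeq ρ.2).getD j 0 := by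
          intro j hjt hij
          have hAj : (piSeq σ.2).getD j 0 ≤ (piSeq σ.2).getD i₀ 0 := piSeq_anti σ.2 hij
          have hmax : m ≤ max ((piSeq σ.2).getD j 0) ((piSeq ρ.2).getD j 0) := by
            rw [← hCget j (by omega)]
            exact hCge j hjt
          rcases le_max_iff.1 hmax with h1 | h1
          · omega
          · exact h1
        apply embed_of_le
        intro i hi
        rw [hθget i hi]
        rcases le_or_gt i₀ i with hc | hc
        · exact key i hi hc
        · have h1 : m ≤ (piSeq ρ.2).getD i₀ 0 := key i₀ hi₀t le_rfl
          have h2 : (piSeq ρ.2).getD i₀ 0 ≤ (piSeq ρ.2).getD i 0 := piSeq_anti ρ.2 (le_of_lt hc)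
          omega
end
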